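/- arXiv:1607.01387 — 4 statements merged into one kernel-verified Lean document; each statement's English description precedes it below -/
import Mathlib

section
/- Let Σ ⊆ F₂^{2n} be an isotropic subspace (a stabilizer module) and for a subset M of the n qubits let ℓ_M denote the dimension over F₂ of (Σ^⊥ ∩ V_M)/(Σ ∩ V_M), where V_M ⊆ F₂^{2n} is the subspace of vectors supported on M. Then ℓ_M + ℓ_{M^c} = 2(n − dim Σ), i.e., ℓ_M + ℓ_{M^c} = 2k where k is the number of logical qubits. -/
open Matrix

/-- The subspace of vectors of `F₂^{2n}` supported on the set `M` of qubits. -/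
noncomputable def coordSubspace {n : ℕ} (M : Finset (Fin n)) :
    Submodule (ZMod 2) (Fin n ⊕ Fin n → ZMod 2) :=
  ⨅ i ∈ Mᶜ, (LinearMap.ker (LinearMap.proj (R := ZMod 2) (φ := fun _ : Fin n ⊕ Fin n => ZMod 2) (Sum.inl i)) ⊓
    LinearMap.ker (LinearMap.proj (R := ZMod 2) (φ := fun _ : Fin n ⊕ Fin n => ZMod 2) (Sum.inr i)))

/-- The standard symplectic form on `F₂^{2n}` (over `F₂`, `−1 = 1`). -/
noncomputable def stdSymplecticForm (n : ℕ) :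
    LinearMap.BilinForm (ZMod 2) (Fin n ⊕ Fin n → ZMod 2) :=
  Matrix.toLinearMap₂' (ZMod 2) (Matrix.fromBlocks 0 1 1 0)

lemma std_apply {n : ℕ} (x y : Fin n ⊕ Fin n → ZMod 2) :
    stdSymplecticForm n x y =
      ∑ i : Fin n, (x (Sum.inl i) * y (Sum.inr i) + x (Sum.inr i) * y (Sum.inl i)) := by
  rw [stdSymplecticForm, Matrix.toLinearMap₂'_apply]
  simp [Fintype.sum_sum_type, Matrix.one_apply, mul_ite, Finset.sum_add_distrib,
    Finset.sum_ite_eq, smul_eq_mul]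
  exact add_comm _ _

lemma mem_coord {n : ℕ} {M : Finset (Fin n)} {x : Fin n ⊕ Fin n → ZMod 2} :
    x ∈ coordSubspace M ↔ ∀ i ∉ M, x (Sum.inl i) = 0 ∧ x (Sum.inr i) = 0 := by
  simp [coordSubspace, Submodule.mem_iInf, Finset.mem_compl]

lemma std_symm {n : ℕ} (x y : Fin n ⊕ Fin n → ZMod 2) :
    stdSymplecticForm n x y = stdSymplecticForm n y x := by
  rw [std_apply, std_apply]
  exact Finset.sum_congr rfl fun i _ => by ring

lemma std_refl {n : ℕ} : (stdSymplecticForm n).IsRefl := by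
  intro x y h; rw [std_symm]; exact h

lemma orth_coord {n : ℕ} (M : Finset (Fin n)) :
    (stdSymplecticForm n).orthogonal (coordSubspace M) = coordSubspace Mᶜ := by
  classical
  ext x
  rw [LinearMap.BilinForm.mem_orthogonal_iff, mem_coord]
  constructor
  · intro h i hi
    simp only [Finset.mem_compl, not_not] at hi
    constructor
    · have := h (Pi.single (Sum.inr i) 1) (by
        rw [mem_coord]; intro j hj
        constructor <;> simp [Pi.single_apply, fun h' : i = j => hj (h' ▸ hi)]
        intro h'; exact absurd (h' ▸ hi) hj)
      rw [std_apply] at this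
      simpa [Pi.single_apply, Finset.sum_ite_eq] using this
    · have := h (Pi.single (Sum.inl i) 1) (by
        rw [mem_coord]; intro j hj
        constructor <;> simp [Pi.single_apply]
        intro h'; exact absurd (h' ▸ hi) hj)
      rw [std_apply] at this
      simpa [Pi.single_apply, Finset.sum_ite_eq] using this
  · intro h y hy
    rw [mem_coord] at hy
    rw [std_apply]
    refine Finset.sum_eq_zero fun i _ => ?_
    by_cases hi : i ∈ M
    · obtain ⟨h1, h2⟩ := h i (by simpa using hi)
      rw [h1, h2, mul_zero, mul_zero, add_zero]
    · obtain ⟨h1, h2⟩ := hy i hi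
      rw [h1, h2, zero_mul, zero_mul, add_zero]

lemma coord_univ {n : ℕ} : coordSubspace (Finset.univ : Finset (Fin n)) = ⊤ := by
  rw [eq_top_iff]; intro x _; rw [mem_coord]; intro i hi; simp at hi

lemma coord_empty {n : ℕ} : coordSubspace (∅ : Finset (Fin n)) = ⊥ := by
  rw [eq_bot_iff]; intro x hx
  rw [mem_coord] at hx
  simp only [Submodule.mem_bot]
  funext j
  rcases j with i | i
  · exact (hx i (by simp)).1
  · exact (hx i (by simp)).2

lemma std_nondeg {n : ℕ} : (stdSymplecticForm n).Nondegenerate := by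
  refine (LinearMap.IsRefl.nondegenerate_iff_separatingLeft std_refl).2 ?_
  intro x hx
  have : x ∈ (stdSymplecticForm n).orthogonal (coordSubspace (Finset.univ : Finset (Fin n))) := by
    intro y _
    rw [std_symm]
    exact hx y
  rw [orth_coord, Finset.compl_univ, coord_empty] at this
  simpa using this

lemma orth_sup {n : ℕ} (p q : Submodule (ZMod 2) (Fin n ⊕ Fin n → ZMod 2)) :
    (stdSymplecticForm n).orthogonal (p ⊔ q) =
      (stdSymplecticForm n).orthogonal p ⊓ (stdSymplecticForm n).orthogonal q := by
  ext x
  simp only [Submodule.mem_inf, LinearMap.BilinForm.mem_orthogonal_iff]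
  constructor
  · exact fun h => ⟨fun y hy => h y (Submodule.mem_sup_left hy),
      fun y hy => h y (Submodule.mem_sup_right hy)⟩
  · rintro ⟨h1, h2⟩ y hy
    obtain ⟨a, ha, b, hb, rfl⟩ := Submodule.mem_sup.1 hy
    have : stdSymplecticForm n (a + b) x = stdSymplecticForm n a x + stdSymplecticForm n b x := by
      simp
    rw [this, h1 a ha, h2 b hb, add_zero]

lemma finrank_coord {n : ℕ} (M : Finset (Fin n)) :
    Module.finrank (ZMod 2) (coordSubspace M) = 2 * M.card := by
  classical
  set S : Finset (Fin n ⊕ Fin n) := Mᶜ.image Sum.inl ∪ Mᶜ.image Sum.inr with hS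
  have hdisj : Disjoint (Mᶜ.image Sum.inl) (Mᶜ.image Sum.inr) := by
    simp [Finset.disjoint_left]
  have hcard : S.card = 2 * Mᶜ.card := by
    rw [hS, Finset.card_union_of_disjoint hdisj,
      Finset.card_image_of_injective _ Sum.inl_injective,
      Finset.card_image_of_injective _ Sum.inr_injective]
    ring
  have hker : coordSubspace M = LinearMap.ker
      (LinearMap.funLeft (ZMod 2) (ZMod 2) (Subtype.val : {j // j ∈ S} → Fin n ⊕ Fin n)) := by
    ext x
    rw [mem_coord, LinearMap.mem_ker]
    constructor
    · intro h
      funext j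
      obtain ⟨j, hj⟩ := j
      simp only [LinearMap.funLeft_apply, Pi.zero_apply]
      rw [hS] at hj
      simp only [Finset.mem_union, Finset.mem_image, Finset.mem_compl] at hj
      rcases hj with ⟨i, hi, rfl⟩ | ⟨i, hi, rfl⟩
      · exact (h i hi).1
      · exact (h i hi).2
    · intro h i hi
      have h1 := congrFun h ⟨Sum.inl i, by simp [hS, hi]⟩
      have h2 := congrFun h ⟨Sum.inr i, by simp [hS, hi]⟩
      exact ⟨h1, h2⟩
  have hsurj : LinearMap.range
      (LinearMap.funLeft (ZMod 2) (ZMod 2) (Subtype.val : {j // j ∈ S} → Fin n ⊕ Fin n)) = ⊤ :=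
    LinearMap.range_eq_top.2 (LinearMap.funLeft_surjective_of_injective _ _ _ Subtype.val_injective)
  have h1 := LinearMap.finrank_range_add_finrank_ker
    (LinearMap.funLeft (ZMod 2) (ZMod 2) (Subtype.val : {j // j ∈ S} → Fin n ⊕ Fin n))
  rw [hsurj, finrank_top, ← hker] at h1
  have hdom : Module.finrank (ZMod 2) (Fin n ⊕ Fin n → ZMod 2) = 2 * n := by
    rw [Module.finrank_fintype_fun_eq_card]
    simp [two_mul]
  have hcod : Module.finrank (ZMod 2) ({j // j ∈ S} → ZMod 2) = S.card := by
    rw [Module.finrank_fintype_fun_eq_card, Fintype.card_coe]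
  rw [hdom, hcod, hcard] at h1
  have hM := Finset.card_compl M
  have hMle := Finset.card_le_univ M
  simp only [Fintype.card_fin] at hM hMle
  omega

/-- `ℓ_M` : the number of independent logical operators supported on `M`, i.e. the
dimension of `(Σ^⊥ ∩ V_M)/(Σ ∩ V_M)`. -/
noncomputable def numLogical {n : ℕ} (Sig : Submodule (ZMod 2) (Fin n ⊕ Fin n → ZMod 2))
    (M : Finset (Fin n)) : ℕ :=
  Module.finrank (ZMod 2)
    (↥((stdSymplecticForm n).orthogonal Sig ⊓ coordSubspace M) ⧸
      Submodule.comap ((stdSymplecticForm n).orthogonal Sig ⊓ coordSubspace M).subtype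
        (Sig ⊓ coordSubspace M))

set_option maxHeartbeats 1000000 in
set_option synthInstance.maxHeartbeats 400000 in
/-- Logical operator counting: `ℓ_M + ℓ_{M^c} = 2k` where `k = n − dim Σ`. -/
theorem logical_operator_counting {n : ℕ}
    (Sig : Submodule (ZMod 2) (Fin n ⊕ Fin n → ZMod 2))
    (hiso : ∀ x ∈ Sig, ∀ y ∈ Sig, stdSymplecticForm n x y = 0)
    (M : Finset (Fin n)) :
    numLogical Sig M + numLogical Sig Mᶜ =
      2 * (n - Module.finrank (ZMod 2) Sig) := by
  classical
  have hdom : Module.finrank (ZMod 2) (Fin n ⊕ Fin n → ZMod 2) = 2 * n := by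
    rw [Module.finrank_fintype_fun_eq_card]; simp [two_mul]
  have hSig : Sig ≤ (stdSymplecticForm n).orthogonal Sig := fun x hx y hy => hiso y hy x hx
  -- quotient dimension
  have key : ∀ N : Finset (Fin n), numLogical Sig N +
      Module.finrank (ZMod 2) (Sig ⊓ coordSubspace N : Submodule (ZMod 2) _) =
      Module.finrank (ZMod 2)
        ((stdSymplecticForm n).orthogonal Sig ⊓ coordSubspace N : Submodule (ZMod 2) _) := by
    intro N
    have hle : Sig ⊓ coordSubspace N ≤ (stdSymplecticForm n).orthogonal Sig ⊓ coordSubspace N :=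
      inf_le_inf_right _ hSig
    have h := Submodule.finrank_quotient_add_finrank
      (Submodule.comap ((stdSymplecticForm n).orthogonal Sig ⊓ coordSubspace N).subtype
        (Sig ⊓ coordSubspace N))
    have h2 : Module.finrank (ZMod 2)
        (Submodule.comap ((stdSymplecticForm n).orthogonal Sig ⊓ coordSubspace N).subtype
          (Sig ⊓ coordSubspace N)) =
        Module.finrank (ZMod 2) (Sig ⊓ coordSubspace N : Submodule (ZMod 2) _) :=
      (Submodule.comapSubtypeEquivOfLe hle).finrank_eq
    rw [numLogical]
    omega
  -- orthogonal identity
  have orthEq : ∀ N : Finset (Fin n),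
      (stdSymplecticForm n).orthogonal Sig ⊓ coordSubspace N =
      (stdSymplecticForm n).orthogonal (Sig ⊔ coordSubspace Nᶜ) := by
    intro N
    rw [orth_sup, orth_coord, compl_compl]
  -- dimension of orthogonal complements
  have dim1 : ∀ W : Submodule (ZMod 2) (Fin n ⊕ Fin n → ZMod 2),
      Module.finrank (ZMod 2) W +
        Module.finrank (ZMod 2) ((stdSymplecticForm n).orthogonal W) = 2 * n := by
    intro W
    have h := LinearMap.BilinForm.finrank_add_finrank_orthogonal (B := stdSymplecticForm n)
      std_refl W
    rw [LinearMap.BilinForm.orthogonal_top_eq_bot std_nondeg, inf_bot_eq, finrank_bot,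
      add_zero, hdom] at h
    exact h
  have dim2 : ∀ N : Finset (Fin n),
      Module.finrank (ZMod 2) (Sig ⊔ coordSubspace N : Submodule (ZMod 2) _) +
        Module.finrank (ZMod 2) (Sig ⊓ coordSubspace N : Submodule (ZMod 2) _) =
      Module.finrank (ZMod 2) Sig + 2 * N.card := by
    intro N
    rw [Submodule.finrank_sup_add_finrank_inf_eq, finrank_coord]
  -- s ≤ n
  have hsle : Module.finrank (ZMod 2) Sig ≤ n := by
    have h := dim1 Sig
    have h2 : Module.finrank (ZMod 2) Sig ≤
        Module.finrank (ZMod 2) ((stdSymplecticForm n).orthogonal Sig) :=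
      Submodule.finrank_mono hSig
    omega
  have kM := key M
  have kMc := key Mᶜ
  rw [orthEq M] at kM
  rw [orthEq Mᶜ, compl_compl] at kMc
  have e1 := dim1 (Sig ⊔ coordSubspace Mᶜ)
  have e2 := dim1 (Sig ⊔ coordSubspace M)
  have d2M := dim2 M
  have d2Mc := dim2 Mᶜ
  have hcomp : M.card + Mᶜ.card = n := by
    have := Finset.card_compl M
    have := Finset.card_le_univ M
    simp only [Fintype.card_fin] at *
    omega
  omega
end

section
/- Let R be an integral domain and let σ, τ be matrices over R with 2q rows such that the column spans satisfy im σ = im τ as submodules of R^{2q}. Then the torsion submodules of the cokernels of the transposed (conjugate) maps are isomorphic as R-modules: T(coker σᵀ) ≅ T(coker τᵀ). -/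
open Matrix

section Aux

variable {R M N P : Type*} [CommRing R] [AddCommGroup M] [Module R M]
  [AddCommGroup N] [Module R N] [AddCommGroup P] [Module R P]

/-- Torsion submodules are preserved by linear equivalences. -/
def torsionCongr (e : M ≃ₗ[R] N) :
    Submodule.torsion R M ≃ₗ[R] Submodule.torsion R N where
  toFun x := ⟨e x, by
    obtain ⟨a, ha⟩ := x.2
    refine ⟨a, ?_⟩
    rw [Submonoid.smul_def] at ha ⊢
    rw [← LinearEquiv.map_smul, ha, map_zero]⟩
  invFun y := ⟨e.symm y, by
    obtain ⟨a, ha⟩ := y.2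
    refine ⟨a, ?_⟩
    rw [Submonoid.smul_def] at ha ⊢
    rw [← LinearEquiv.map_smul, ha, map_zero]⟩
  map_add' x y := by ext; simp
  map_smul' r x := by ext; simp
  left_inv x := by ext; simp
  right_inv y := by ext; simp

/-- Torsion of `M × N` with `N` torsion-free is the torsion of `M`. -/
def torsionProdEquiv [IsDomain R] [NoZeroSMulDivisors R N] :
    Submodule.torsion R (M × N) ≃ₗ[R] Submodule.torsion R M where
  toFun x := ⟨(x : M × N).1, by
    obtain ⟨a, ha⟩ := x.2
    refine ⟨a, ?_⟩
    rw [Submonoid.smul_def] at ha ⊢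
    exact congrArg Prod.fst ha⟩
  invFun m := ⟨((m : M), 0), by
    obtain ⟨a, ha⟩ := m.2
    refine ⟨a, ?_⟩
    rw [Submonoid.smul_def] at ha ⊢
    exact Prod.ext_iff.mpr ⟨ha, smul_zero _⟩⟩
  map_add' x y := by ext; simp
  map_smul' r x := by ext; simp
  left_inv x := by
    obtain ⟨a, ha⟩ := x.2
    rw [Submonoid.smul_def] at ha
    have h2 : (a : R) • (x : M × N).2 = 0 := congrArg Prod.snd ha
    have hsnd : (x : M × N).2 = 0 := by
      rcases (smul_eq_zero (r := (a : R)) (m := (x : M × N).2)).mp h2 with h | h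
      · exact absurd h (nonZeroDivisors.coe_ne_zero a)
      · exact h
    ext
    · rfl
    · exact hsnd.symm
  right_inv m := by ext; rfl

/-- Quotient of a product by a product of submodules. -/
noncomputable def quotProdEquiv (p : Submodule R M) (q : Submodule R N) :
    ((M × N) ⧸ p.prod q) ≃ₗ[R] (M ⧸ p) × (N ⧸ q) :=
  (Submodule.quotEquivOfEq _ _ (by
      rw [LinearMap.ker_prodMap, Submodule.ker_mkQ, Submodule.ker_mkQ])).symm.trans
    (LinearMap.quotKerEquivOfSurjective (p.mkQ.prodMap q.mkQ)
      (Function.Surjective.prodMap (Submodule.mkQ_surjective p) (Submodule.mkQ_surjective q)))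

/-- Shearing automorphism of `M × N`. -/
def shear (ℓ : M →ₗ[R] N) : (M × N) ≃ₗ[R] (M × N) where
  toFun x := (x.1, x.2 - ℓ x.1)
  invFun x := (x.1, x.2 + ℓ x.1)
  map_add' x y := by ext <;> simp <;> abel
  map_smul' r x := by ext <;> simp [smul_sub]
  left_inv x := by ext <;> simp
  right_inv x := by ext <;> simp

theorem shear_map_range (f : P →ₗ[R] M) (g : P →ₗ[R] N) (ℓ : M →ₗ[R] N)
    (h : ℓ ∘ₗ f = g) :
    (LinearMap.range (f.prod g)).map (shear ℓ : (M × N) →ₗ[R] (M × N)) =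
      (LinearMap.range f).prod ⊥ := by
  ext x
  simp only [Submodule.mem_map, LinearMap.mem_range, Submodule.mem_prod,
    Submodule.mem_bot]
  constructor
  · rintro ⟨y, ⟨p, rfl⟩, rfl⟩
    have hg : ℓ (f p) = g p := congrFun (congrArg DFunLike.coe h) p
    exact ⟨⟨p, rfl⟩, by simp [shear, LinearMap.prod_apply, hg]⟩
  · rintro ⟨⟨p, hp⟩, h2⟩
    refine ⟨(f p, g p), ⟨p, rfl⟩, ?_⟩
    have hg : ℓ (f p) = g p := congrFun (congrArg DFunLike.coe h) p
    have hx : x = (f p, 0) := Prod.ext_iff.mpr ⟨hp.symm, h2⟩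
    rw [hx]
    simp [shear, LinearMap.prod_apply, hg]

/-- Intermediate quotient equivalence. -/
noncomputable def quotStep (f : P →ₗ[R] M) (g : P →ₗ[R] N) (ℓ : M →ₗ[R] N)
    (h : ℓ ∘ₗ f = g) :
    ((M × N) ⧸ LinearMap.range (f.prod g)) ≃ₗ[R] (M ⧸ LinearMap.range f) × N :=
  LinearEquiv.trans
    (Submodule.Quotient.equiv (LinearMap.range (f.prod g))
      ((LinearMap.range f).prod (⊥ : Submodule R N)) (shear ℓ) (shear_map_range f g ℓ h))
    (LinearEquiv.trans (quotProdEquiv (LinearMap.range f) (⊥ : Submodule R N))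
      (LinearEquiv.prodCongr (LinearEquiv.refl R (M ⧸ LinearMap.range f))
        (Submodule.quotEquivOfEqBot (⊥ : Submodule R N) rfl)))

/-- Main abstract lemma. -/
noncomputable def auxEquiv [IsDomain R] [NoZeroSMulDivisors R N]
    (f : P →ₗ[R] M) (g : P →ₗ[R] N) (ℓ : M →ₗ[R] N) (h : ℓ ∘ₗ f = g) :
    Submodule.torsion R ((M × N) ⧸ LinearMap.range (f.prod g)) ≃ₗ[R]
      Submodule.torsion R (M ⧸ LinearMap.range f) :=
  LinearEquiv.trans (torsionCongr (quotStep f g ℓ h)) torsionProdEquiv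

end Aux

theorem exists_factor {R : Type*} [CommRing R] {m t₁ t₂ : ℕ}
    (σ : Matrix (Fin m) (Fin t₁) R) (τ : Matrix (Fin m) (Fin t₂) R)
    (hle : LinearMap.range τ.mulVecLin ≤ LinearMap.range σ.mulVecLin) :
    ∃ ℓ : (Fin t₁ → R) →ₗ[R] (Fin t₂ → R),
      ℓ ∘ₗ σ.transpose.mulVecLin = τ.transpose.mulVecLin := by
  have hcol : ∀ j, ∃ x : Fin t₁ → R, σ.mulVec x = fun i => τ i j := by
    intro j
    have : (fun i => τ i j) ∈ LinearMap.range τ.mulVecLin := by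
      refine ⟨Pi.single j 1, ?_⟩
      simp [Matrix.mulVecLin_apply, Matrix.mulVec_single]
      rfl
    obtain ⟨x, hx⟩ := hle this
    exact ⟨x, hx⟩
  choose x hx using hcol
  set A : Matrix (Fin t₁) (Fin t₂) R := Matrix.of fun k j => x j k with hA
  have hmul : σ * A = τ := by
    ext i j
    have := congrFun (hx j) i
    simpa [Matrix.mul_apply, Matrix.mulVec, dotProduct, hA] using this
  refine ⟨A.transpose.mulVecLin, ?_⟩
  rw [← Matrix.mulVecLin_mul, ← Matrix.transpose_mul, hmul]

/-- If two matrices `σ`, `τ` over a domain `R` with `2q` rows have the same column span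
in `R^{2q}`, then the torsion submodules of the cokernels of their transposes are
isomorphic as `R`-modules. -/
theorem torsion_coker_transpose_iso {R : Type*} [CommRing R] [IsDomain R]
    (q t₁ t₂ : ℕ)
    (σ : Matrix (Fin (2 * q)) (Fin t₁) R) (τ : Matrix (Fin (2 * q)) (Fin t₂) R)
    (him : LinearMap.range σ.mulVecLin = LinearMap.range τ.mulVecLin) :
    Nonempty
      ((Submodule.torsion R ((Fin t₁ → R) ⧸ LinearMap.range σ.transpose.mulVecLin)) ≃ₗ[R]
       (Submodule.torsion R ((Fin t₂ → R) ⧸ LinearMap.range τ.transpose.mulVecLin))) := by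
  obtain ⟨ℓ₁, hℓ₁⟩ := exists_factor σ τ him.ge
  obtain ⟨ℓ₂, hℓ₂⟩ := exists_factor τ σ him.le
  set f := σ.transpose.mulVecLin with hf
  set g := τ.transpose.mulVecLin with hg
  have e₁ := auxEquiv f g ℓ₁ hℓ₁
  have e₂ := auxEquiv g f ℓ₂ hℓ₂
  have hcomm : (LinearMap.range (f.prod g)).map
      ((LinearEquiv.prodComm R (Fin t₁ → R) (Fin t₂ → R)) :
        ((Fin t₁ → R) × (Fin t₂ → R)) →ₗ[R] ((Fin t₂ → R) × (Fin t₁ → R)))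
      = LinearMap.range (g.prod f) := by
    rw [← LinearMap.range_comp]
    congr 1
  have emid := torsionCongr (R := R)
    (Submodule.Quotient.equiv (LinearMap.range (f.prod g)) (LinearMap.range (g.prod f))
      (LinearEquiv.prodComm R _ _) hcomm)
  exact ⟨(e₁.symm.trans emid).trans e₂⟩
end

section
/- Over R = F₂[x^{±1}, y^{±1}], the toric code chain complex R ←∂₁ R² ←∂₂ R, with ∂₁ = (x−1, y−1) and ∂₂ = (y−1, −x+1)ᵀ, satisfies ∂₁∂₂ = 0 and is exact at the middle: ker ∂₁ = im ∂₂. -/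
/-- The Laurent polynomial ring `F₂[x^{±1}, y^{±1}]` as the group algebra of `ℤ × ℤ`. -/
abbrev LaurentF2 : Type := AddMonoidAlgebra (ZMod 2) (ℤ × ℤ)

noncomputable def Lx : LaurentF2 := AddMonoidAlgebra.single (1, 0) 1
noncomputable def Ly : LaurentF2 := AddMonoidAlgebra.single (0, 1) 1

/-- `∂₁ = (x−1, y−1) : R² → R`. -/
noncomputable def toricD1 : (Fin 2 → LaurentF2) →ₗ[LaurentF2] (Fin 1 → LaurentF2) :=
  Matrix.mulVecLin !![Lx - 1, Ly - 1]

/-- `∂₂ = (y−1, −x+1)ᵀ : R → R²`. -/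
noncomputable def toricD2 : (Fin 1 → LaurentF2) →ₗ[LaurentF2] (Fin 2 → LaurentF2) :=
  Matrix.mulVecLin !![Ly - 1; -Lx + 1]

noncomputable instance : IsDomain LaurentF2 := NoZeroDivisors.to_isDomain _

/-- The projection `(m,n) ↦ (0,n)`. -/
def toricPi : ℤ × ℤ →+ ℤ × ℤ := AddMonoidHom.prod 0 (AddMonoidHom.snd ℤ ℤ)

/-- Evaluation at `x = 1`. -/
noncomputable def toricEps : LaurentF2 →+* LaurentF2 :=
  AddMonoidAlgebra.mapDomainRingHom (ZMod 2) toricPi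

lemma toricEps_single (a : ℤ × ℤ) (c : ZMod 2) :
    toricEps (AddMonoidAlgebra.single a c) = AddMonoidAlgebra.single (0, a.2) c := by
  simp [toricEps, AddMonoidAlgebra.mapDomainRingHom, Finsupp.mapDomain_single, toricPi]

lemma Xm_sub_one_mem (m : ℤ) :
    AddMonoidAlgebra.single ((m, 0) : ℤ × ℤ) (1 : ZMod 2) - 1 ∈ Ideal.span {Lx - 1} := by
  induction m using Int.induction_on with
  | zero => simp [AddMonoidAlgebra.one_def, Prod.mk_zero_zero]
  | succ m ih =>
      have key : AddMonoidAlgebra.single ((m + 1, 0) : ℤ × ℤ) (1 : ZMod 2) - 1 =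
          AddMonoidAlgebra.single ((m, 0) : ℤ × ℤ) (1 : ZMod 2) * (Lx - 1) +
          (AddMonoidAlgebra.single ((m, 0) : ℤ × ℤ) (1 : ZMod 2) - 1) := by
        rw [mul_sub, Lx, AddMonoidAlgebra.single_mul_single]
        norm_num
      rw [key]
      exact add_mem (Ideal.mul_mem_left _ _ (Ideal.subset_span rfl)) ih
  | pred m ih =>
      have key : AddMonoidAlgebra.single ((-m - 1, 0) : ℤ × ℤ) (1 : ZMod 2) - 1 =
          -(AddMonoidAlgebra.single ((-m - 1, 0) : ℤ × ℤ) (1 : ZMod 2)) * (Lx - 1) +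
          (AddMonoidAlgebra.single ((-m, 0) : ℤ × ℤ) (1 : ZMod 2) - 1) := by
        rw [neg_mul, mul_sub, Lx, AddMonoidAlgebra.single_mul_single]
        norm_num
      rw [key]
      exact add_mem (Ideal.mul_mem_left _ _ (Ideal.subset_span rfl)) ih

lemma toricEps_smul (r : ZMod 2) (f : LaurentF2) : toricEps (r • f) = r • toricEps f :=
  by ext; simp [toricEps, Finsupp.mapDomain_smul]

lemma sub_eps_mem (f : LaurentF2) : f - toricEps f ∈ Ideal.span {Lx - 1} := by
  refine AddMonoidAlgebra.induction_on (motive := fun f => f - toricEps f ∈ Ideal.span {Lx - 1}) f ?_ ?_ ?_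
  · intro a
    rw [AddMonoidAlgebra.of_apply, toricEps_single]
    simp only [toAdd_ofAdd]
    have key : AddMonoidAlgebra.single (a : ℤ × ℤ) (1 : ZMod 2)
          - AddMonoidAlgebra.single ((0, a.2) : ℤ × ℤ) (1 : ZMod 2) =
        AddMonoidAlgebra.single ((0, a.2) : ℤ × ℤ) (1 : ZMod 2) *
          (AddMonoidAlgebra.single ((a.1, 0) : ℤ × ℤ) (1 : ZMod 2) - 1) := by
      rw [mul_sub, AddMonoidAlgebra.single_mul_single, mul_one, mul_one]
      norm_num
    rw [key]
    exact Ideal.mul_mem_left _ _ (Xm_sub_one_mem a.1)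
  · intro f g hf hg
    have : (f + g) - toricEps (f + g) = (f - toricEps f) + (g - toricEps g) := by
      rw [map_add]; ring
    rw [this]; exact add_mem hf hg
  · intro r f hf
    have : (r • f) - toricEps (r • f) = r • (f - toricEps f) := by
      rw [toricEps_smul, smul_sub]
    rw [this]
    exact Submodule.smul_of_tower_mem _ r hf

lemma mem_of_eps_eq_zero {f : LaurentF2} (h : toricEps f = 0) : ∃ c, f = (Lx - 1) * c := by
  have := sub_eps_mem f
  rw [h, sub_zero, Ideal.mem_span_singleton] at this
  obtain ⟨c, hc⟩ := this
  exact ⟨c, hc⟩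

lemma Lx_sub_one_ne : Lx - 1 ≠ 0 := by
  rw [sub_ne_zero, Lx, AddMonoidAlgebra.one_def]
  intro h
  rw [AddMonoidAlgebra.single_inj] at h
  simp at h

lemma Ly_sub_one_ne : Ly - 1 ≠ 0 := by
  rw [sub_ne_zero, Ly, AddMonoidAlgebra.one_def]
  intro h
  rw [AddMonoidAlgebra.single_inj] at h
  simp at h

lemma eps_Lx : toricEps Lx = 1 := by
  rw [Lx, toricEps_single]; rfl

lemma eps_Ly : toricEps Ly = Ly := by
  rw [Ly, toricEps_single]

/-- The toric code chain complex is a complex (`∂₁∂₂ = 0`) and is exact in the middle: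
`ker ∂₁ = im ∂₂` over `F₂[x^{±1}, y^{±1}]`. -/
theorem toric_code_exact :
    toricD1 ∘ₗ toricD2 = 0 ∧ LinearMap.ker toricD1 = LinearMap.range toricD2 := by
  have hcomp : toricD1 ∘ₗ toricD2 = 0 := by
    rw [toricD1, toricD2, ← Matrix.mulVecLin_mul]
    have : (!![Lx - 1, Ly - 1] * !![Ly - 1; -Lx + 1] : Matrix (Fin 1) (Fin 1) LaurentF2) = 0 := by
      refine Matrix.ext fun i j => ?_
      fin_cases i; fin_cases j
      simp [Matrix.mul_apply, Fin.sum_univ_two]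
      ring
    rw [this, Matrix.mulVecLin_zero]
  refine ⟨hcomp, le_antisymm ?_ ?_⟩
  · intro u hu
    rw [LinearMap.mem_ker] at hu
    have h0 : (Lx - 1) * u 0 + (Ly - 1) * u 1 = 0 := by
      have := congrFun hu 0
      simpa [toricD1, Matrix.mulVecLin_apply, Matrix.mulVec, dotProduct,
        Fin.sum_univ_two] using this
    have heps : toricEps (u 1) = 0 := by
      have h1 := congrArg toricEps h0
      rw [map_add, map_mul, map_mul, map_zero, map_sub, map_sub, eps_Lx, eps_Ly,
        map_one, sub_self, zero_mul, zero_add] at h1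
      rcases mul_eq_zero.mp h1 with h | h
      · exact absurd h Ly_sub_one_ne
      · exact h
    obtain ⟨c, hc⟩ := mem_of_eps_eq_zero heps
    have hu0 : u 0 = (Ly - 1) * (-c) := by
      have hcancel : (Lx - 1) * u 0 = (Lx - 1) * ((Ly - 1) * (-c)) := by
        have : (Lx - 1) * u 0 = -((Ly - 1) * ((Lx - 1) * c)) := by
          rw [← hc]; linear_combination h0
        rw [this]; ring
      exact mul_left_cancel₀ Lx_sub_one_ne hcancel
    refine ⟨fun _ => -c, ?_⟩
    funext i
    fin_cases i
    · simpa [toricD2, Matrix.mulVecLin_apply, Matrix.mulVec, dotProduct,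
        Fin.sum_univ_one] using hu0.symm
    · have : (-Lx + 1) * (-c) = u 1 := by rw [hc]; ring
      simpa [toricD2, Matrix.mulVecLin_apply, Matrix.mulVec, dotProduct,
        Fin.sum_univ_one] using this
  · rintro u ⟨v, rfl⟩
    rw [LinearMap.mem_ker, ← LinearMap.comp_apply, hcomp, LinearMap.zero_apply]
end

section
/- Over R = F₂[x^{±1}, y^{±1}, z^{±1}], the image of the cubic code excitation map ε = (1+x+y+z, 1+xy+yz+zx) : R² → R, i.e., the ideal generated by 1+x+y+z and 1+xy+yz+zx, contains no nonzero binomial: no element of the form m₁ + m₂ with m₁, m₂ distinct monomials, and no single monomial, lies in this ideal. -/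
/-- The Laurent polynomial ring `F₂[x^{±1}, y^{±1}, z^{±1}]` as the group algebra of `ℤ³`. -/
abbrev Laurent3F2 : Type := AddMonoidAlgebra (ZMod 2) (ℤ × ℤ × ℤ)

noncomputable def cx : Laurent3F2 := AddMonoidAlgebra.single (1, 0, 0) 1
noncomputable def cy : Laurent3F2 := AddMonoidAlgebra.single (0, 1, 0) 1
noncomputable def cz : Laurent3F2 := AddMonoidAlgebra.single (0, 0, 1) 1

/-- The ideal generated by the two cubic code polynomials
`1 + x + y + z` and `1 + xy + yz + zx`. -/
noncomputable def cubicIdeal : Ideal Laurent3F2 :=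
  Ideal.span {1 + cx + cy + cz, 1 + cx * cy + cy * cz + cz * cx}

open Polynomial

noncomputable section
def q2 : (ZMod 2)[X] := X^2 + X + 1

lemma q2_natDegree : q2.natDegree = 2 := by
  unfold q2; compute_degree!

lemma q2_irred : Irreducible q2 := by
  rw [Polynomial.irreducible_iff_roots_eq_zero_of_degree_le_three (by rw [q2_natDegree]) (by rw [q2_natDegree]; norm_num)]
  rw [Multiset.eq_zero_iff_forall_notMem]
  intro r hr
  have h0 : q2 ≠ 0 := by
    intro h; have := q2_natDegree; rw [h] at this; simp at this
  rw [Polynomial.mem_roots h0] at hr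
  unfold q2 at hr
  simp [Polynomial.IsRoot] at hr
  revert hr; revert r; decide

instance : Fact (Irreducible q2) := ⟨q2_irred⟩

abbrev F4 := AdjoinRoot q2

def ω : F4 := AdjoinRoot.root q2

lemma hω : ω^2 + ω + 1 = 0 := by
  have := AdjoinRoot.eval₂_root q2
  unfold q2 at this
  simp only [eval₂_add, eval₂_pow, eval₂_X, eval₂_one] at this
  exact this

instance : CharP F4 2 := by
  have : Function.Injective (algebraMap (ZMod 2) F4) := RingHom.injective _
  exact charP_of_injective_algebraMap this 2

lemma hω0 : ω ≠ 0 := by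
  intro h
  have := hω
  rw [h] at this
  simp at this

lemma h2F4 : (2 : F4) = 0 := CharTwo.two_eq_zero

lemma homega_sum : ω + ω^2 = 1 := by
  have h := hω
  have h2 : (2 : F4) = 0 := h2F4
  linear_combination h - h2

abbrev K := RatFunc F4

instance : CharP K 2 := by
  have : Function.Injective (algebraMap F4 K) := RingHom.injective _
  exact charP_of_injective_algebraMap this 2

def pa : F4[X] := C ω * (X + C ω)
def pb : F4[X] := X
def pc : F4[X] := C (ω^2) * (X + C (ω^2))

lemma hω2 : ω^2 ≠ 0 := pow_ne_zero 2 hω0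

lemma pa_ne : pa ≠ 0 := by
  unfold pa
  exact mul_ne_zero (by simpa using hω0) (Polynomial.X_add_C_ne_zero _)

lemma pb_ne : pb ≠ 0 := Polynomial.X_ne_zero

lemma pc_ne : pc ≠ 0 := by
  unfold pc
  exact mul_ne_zero (by simpa using hω2) (Polynomial.X_add_C_ne_zero _)

lemma h2X : (2 : F4[X]) = 0 := CharTwo.two_eq_zero

lemma hωX : (C ω)^2 + C ω + 1 = (0 : F4[X]) := by
  rw [← Polynomial.C_pow, ← Polynomial.C_add, ← Polynomial.C_1, ← Polynomial.C_add, ← Polynomial.C_0]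
  exact congrArg C hω

lemma gen1_eq : 1 + pa + pb + pc = (0 : F4[X]) := by
  unfold pa pb pc
  simp only [map_pow]
  linear_combination (X + 1 + (C ω)^2 - C ω) * hωX

lemma gen2_eq : 1 + pa * pb + pb * pc + pc * pa = (0 : F4[X]) := by
  unfold pa pb pc
  simp only [map_pow]
  linear_combination (X^2*C ω + X*(C ω)^2*(C ω - 1) + (C ω - 1)*((C ω)^3+1)) * hωX + (X*((C ω)^2 + (C ω)^4) + 1) * h2X

lemma rm_pow (r : F4) (p : F4[X]) (hp : p ≠ 0) (n : ℕ) :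
    rootMultiplicity r (p^n) = n * rootMultiplicity r p := by
  induction n with
  | zero => simp [Polynomial.rootMultiplicity_eq_zero (show ¬IsRoot (1 : F4[X]) r by simp [Polynomial.IsRoot])]
  | succ n ih =>
      rw [pow_succ, Polynomial.rootMultiplicity_mul (mul_ne_zero (pow_ne_zero n hp) hp), ih]
      ring

lemma rm_C_mul (r : F4) (u : F4) (hu : u ≠ 0) (p : F4[X]) (hp : p ≠ 0) :
    rootMultiplicity r (C u * p) = rootMultiplicity r p := by
  rw [Polynomial.rootMultiplicity_mul (mul_ne_zero (by simpa using hu) hp),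
    Polynomial.rootMultiplicity_eq_zero (by simp [Polynomial.IsRoot, hu]), zero_add]

lemma rm_lin (r s : F4) : rootMultiplicity r (X + C s : F4[X]) = if r + s = 0 then 1 else 0 := by
  have hsub : (X + C s : F4[X]) = X - C (-s) := by rw [map_neg, sub_neg_eq_add]
  split_ifs with h
  · have hs : -s = r := by linear_combination -h
    rw [hsub, hs]
    exact Polynomial.rootMultiplicity_X_sub_C_self
  · refine Polynomial.rootMultiplicity_eq_zero ?_
    simp only [Polynomial.IsRoot, Polynomial.eval_add, Polynomial.eval_X, Polynomial.eval_C]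
    exact h

lemma rm_pa (r : F4) : rootMultiplicity r pa = if r + ω = 0 then 1 else 0 := by
  unfold pa
  rw [rm_C_mul r ω hω0 _ (Polynomial.X_add_C_ne_zero _), rm_lin]

lemma rm_pb (r : F4) : rootMultiplicity r pb = if r = 0 then 1 else 0 := by
  unfold pb
  have : (X : F4[X]) = X + C 0 := by simp
  rw [this, rm_lin]
  simp

lemma rm_pc (r : F4) : rootMultiplicity r pc = if r + ω^2 = 0 then 1 else 0 := by
  unfold pc
  rw [rm_C_mul r (ω^2) hω2 _ (Polynomial.X_add_C_ne_zero _), rm_lin]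

lemma rm_prod (r : F4) (n m l : ℕ) :
    rootMultiplicity r (pa^n * pb^m * pc^l) =
      n * rootMultiplicity r pa + m * rootMultiplicity r pb + l * rootMultiplicity r pc := by
  have h1 : pa^n ≠ 0 := pow_ne_zero _ pa_ne
  have h2 : pb^m ≠ 0 := pow_ne_zero _ pb_ne
  have h3 : pc^l ≠ 0 := pow_ne_zero _ pc_ne
  rw [Polynomial.rootMultiplicity_mul (mul_ne_zero (mul_ne_zero h1 h2) h3),
    Polynomial.rootMultiplicity_mul (mul_ne_zero h1 h2),
    rm_pow _ _ pa_ne, rm_pow _ _ pb_ne, rm_pow _ _ pc_ne]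

lemma key_nat {n m l n' m' l' : ℕ}
    (h : pa^n * pb^m * pc^l = pa^n' * pb^m' * pc^l') : n = n' ∧ m = m' ∧ l = l' := by
  have hω1 : ω + ω^2 = (1 : F4) := homega_sum
  have hne1 : ω + ω^2 ≠ (0 : F4) := by rw [hω1]; exact one_ne_zero
  have e0 := congrArg (rootMultiplicity (0 : F4)) h
  have eω := congrArg (rootMultiplicity ω) h
  have eω2 := congrArg (rootMultiplicity (ω^2)) h
  have hne1' : ω^2 + ω ≠ (0 : F4) := by rwa [add_comm] at hne1
  have hself : ω + ω = (0 : F4) := CharTwo.add_self_eq_zero ω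
  have hself2 : ω^2 + ω^2 = (0 : F4) := CharTwo.add_self_eq_zero _
  rw [rm_prod, rm_prod, rm_pa, rm_pb, rm_pc] at e0 eω eω2
  simp only [zero_add, eq_self_iff_true, if_true, if_pos rfl, if_neg hω0, if_neg hω2, if_neg hne1, if_neg hne1',
    if_pos hself, if_pos hself2, mul_one, mul_zero, add_zero, zero_add] at e0 eω eω2
  exact ⟨eω, e0, eω2⟩

def A : K := algebraMap F4[X] K pa
def B : K := algebraMap F4[X] K pb
def Cc : K := algebraMap F4[X] K pc

lemma injK : Function.Injective (algebraMap F4[X] K) := RatFunc.algebraMap_injective F4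

lemma A_ne : A ≠ 0 := by
  simpa [A, map_eq_zero_iff _ injK] using pa_ne

lemma B_ne : B ≠ 0 := by
  simpa [B, map_eq_zero_iff _ injK] using pb_ne

lemma Cc_ne : Cc ≠ 0 := by
  simpa [Cc, map_eq_zero_iff _ injK] using pc_ne

def uA : Kˣ := Units.mk0 A A_ne
def uB : Kˣ := Units.mk0 B B_ne
def uC : Kˣ := Units.mk0 Cc Cc_ne

lemma key_int {i j k : ℤ} (h : uA ^ i * uB ^ j * uC ^ k = 1) : i = 0 ∧ j = 0 ∧ k = 0 := by
  have hval : A ^ i * B ^ j * Cc ^ k = 1 := by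
    have := congrArg (Units.val) h
    simpa [uA, uB, uC] using this
  have hA := A_ne; have hB := B_ne; have hC := Cc_ne
  have hnat : A ^ (i.toNat) * B ^ (j.toNat) * Cc ^ (k.toNat)
      = A ^ ((-i).toNat) * B ^ ((-j).toNat) * Cc ^ ((-k).toNat) := by
    have e1 : (i.toNat : ℤ) = i + ((-i).toNat : ℤ) := by omega
    have e2 : (j.toNat : ℤ) = j + ((-j).toNat : ℤ) := by omega
    have e3 : (k.toNat : ℤ) = k + ((-k).toNat : ℤ) := by omega
    calc A ^ (i.toNat) * B ^ (j.toNat) * Cc ^ (k.toNat)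
        = A ^ (i.toNat : ℤ) * B ^ (j.toNat : ℤ) * Cc ^ (k.toNat : ℤ) := by
          rw [zpow_natCast, zpow_natCast, zpow_natCast]
      _ = (A ^ i * B ^ j * Cc ^ k) *
            (A ^ (((-i).toNat : ℕ) : ℤ) * B ^ (((-j).toNat : ℕ) : ℤ) * Cc ^ (((-k).toNat : ℕ) : ℤ)) := by
          rw [e1, e2, e3, zpow_add₀ hA, zpow_add₀ hB, zpow_add₀ hC]; ring
      _ = A ^ ((-i).toNat) * B ^ ((-j).toNat) * Cc ^ ((-k).toNat) := by
          rw [hval, one_mul, zpow_natCast, zpow_natCast, zpow_natCast]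
  have hpoly : pa ^ (i.toNat) * pb ^ (j.toNat) * pc ^ (k.toNat)
      = pa ^ ((-i).toNat) * pb ^ ((-j).toNat) * pc ^ ((-k).toNat) := by
    apply injK
    simpa [A, B, Cc, map_mul, map_pow] using hnat
  obtain ⟨h1, h2, h3⟩ := key_nat hpoly
  omega

lemma zpow_rearrange (u v w : Kˣ) (a b c d e f : ℤ) :
    u^(a+d) * v^(b+e) * w^(c+f) = (u^a * v^b * w^c) * (u^d * v^e * w^f) := by
  rw [zpow_add, zpow_add, zpow_add,
    mul_mul_mul_comm (u^a) (u^d) (v^b) (v^e),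
    mul_mul_mul_comm (u^a * v^b) (u^d * v^e) (w^c) (w^f)]

def gU : Multiplicative (ℤ × ℤ × ℤ) →* Kˣ where
  toFun m := uA ^ (m.toAdd.1) * uB ^ (m.toAdd.2.1) * uC ^ (m.toAdd.2.2)
  map_one' := by
    show uA ^ (0:ℤ) * uB ^ (0:ℤ) * uC ^ (0:ℤ) = 1
    rw [zpow_zero, zpow_zero, zpow_zero, mul_one, mul_one]
  map_mul' x y := by
    show uA ^ (Multiplicative.toAdd x + Multiplicative.toAdd y).1
        * uB ^ (Multiplicative.toAdd x + Multiplicative.toAdd y).2.1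
        * uC ^ (Multiplicative.toAdd x + Multiplicative.toAdd y).2.2 = _
    exact zpow_rearrange uA uB uC _ _ _ _ _ _

def fZ : ZMod 2 →+* K := ZMod.castHom dvd_rfl K

def φ : Laurent3F2 →+* K :=
  AddMonoidAlgebra.liftNCRingHom fZ ((Units.coeHom K).comp gU) (fun _ _ => Commute.all _ _)

lemma φ_single (m : ℤ × ℤ × ℤ) :
    φ (AddMonoidAlgebra.single m 1) = ((uA ^ m.1 * uB ^ m.2.1 * uC ^ m.2.2 : Kˣ) : K) := by
  have h := AddMonoidAlgebra.liftNC_single ((fZ : ZMod 2 →+* K) : ZMod 2 →+ K)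
    (⇑((Units.coeHom K).comp gU)) m (1 : ZMod 2)
  have h2 : φ (AddMonoidAlgebra.single m 1)
      = AddMonoidAlgebra.liftNC ((fZ : ZMod 2 →+* K) : ZMod 2 →+ K)
        (⇑((Units.coeHom K).comp gU)) (AddMonoidAlgebra.single m 1) := rfl
  rw [h2, h]
  have h1 : ((fZ : ZMod 2 →+* K) : ZMod 2 →+ K) 1 = 1 := map_one fZ
  rw [h1, one_mul]
  rfl

lemma φ_cx : φ cx = A := by
  rw [cx, φ_single]
  simp [uA, uB, uC]

lemma φ_cy : φ cy = B := by
  rw [cy, φ_single]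
  simp [uA, uB, uC]

lemma φ_cz : φ cz = Cc := by
  rw [cz, φ_single]
  simp [uA, uB, uC]

lemma hker : cubicIdeal ≤ RingHom.ker φ := by
  rw [cubicIdeal, Ideal.span_le]
  rintro p hp
  simp only [Set.mem_insert_iff, Set.mem_singleton_iff] at hp
  rcases hp with rfl | rfl
  · rw [SetLike.mem_coe, RingHom.mem_ker, map_add, map_add, map_add, map_one,
      φ_cx, φ_cy, φ_cz]
    calc (1 : K) + A + B + Cc = algebraMap F4[X] K (1 + pa + pb + pc) := by
          rw [map_add, map_add, map_add, map_one]; rfl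
      _ = 0 := by rw [gen1_eq, map_zero]
  · rw [SetLike.mem_coe, RingHom.mem_ker, map_add, map_add, map_add, map_one,
      map_mul, map_mul, map_mul, φ_cx, φ_cy, φ_cz]
    calc (1 : K) + A * B + B * Cc + Cc * A
        = algebraMap F4[X] K (1 + pa * pb + pb * pc + pc * pa) := by
          rw [map_add, map_add, map_add, map_one, map_mul, map_mul, map_mul]; rfl
      _ = 0 := by rw [gen2_eq, map_zero]

end

/-- No monomial and no binomial (sum of two distinct monomials) lies in the
image of the cubic code excitation map: topological excitations of the cubic
code are immobile. -/
theorem cubic_code_no_binomial :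
    (∀ m : ℤ × ℤ × ℤ, (AddMonoidAlgebra.single m 1 : Laurent3F2) ∉ cubicIdeal) ∧
    (∀ m₁ m₂ : ℤ × ℤ × ℤ, m₁ ≠ m₂ →
      (AddMonoidAlgebra.single m₁ 1 + AddMonoidAlgebra.single m₂ 1 : Laurent3F2) ∉
        cubicIdeal) := by
  constructor
  · intro m hm
    have h0 : φ (AddMonoidAlgebra.single m 1) = 0 := hker hm
    rw [φ_single] at h0
    exact Units.ne_zero _ h0
  · intro m₁ m₂ hne hm
    have h0 : φ (AddMonoidAlgebra.single m₁ 1 + AddMonoidAlgebra.single m₂ 1) = 0 := hker hm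
    rw [map_add, φ_single, φ_single] at h0
    have hval : ((uA ^ m₁.1 * uB ^ m₁.2.1 * uC ^ m₁.2.2 : Kˣ) : K)
        = ((uA ^ m₂.1 * uB ^ m₂.2.1 * uC ^ m₂.2.2 : Kˣ) : K) := by
      rw [add_eq_zero_iff_eq_neg] at h0
      rwa [CharTwo.neg_eq] at h0
    have hu : (uA ^ m₁.1 * uB ^ m₁.2.1 * uC ^ m₁.2.2 : Kˣ)
        = uA ^ m₂.1 * uB ^ m₂.2.1 * uC ^ m₂.2.2 := Units.ext hval
    have h1 : uA ^ (m₁.1 - m₂.1) * uB ^ (m₁.2.1 - m₂.2.1) * uC ^ (m₁.2.2 - m₂.2.2) = 1 := by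
      rw [zpow_sub, zpow_sub, zpow_sub, ← div_eq_mul_inv, ← div_eq_mul_inv, ← div_eq_mul_inv,
        div_mul_div_comm, div_mul_div_comm, hu, div_self']
    obtain ⟨e1, e2, e3⟩ := key_int h1
    apply hne
    rw [Prod.ext_iff, Prod.ext_iff]
    exact ⟨by omega, by omega, by omega⟩
end
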